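/- Let (Ω, 𝒜, P) be a probability space and n ≥ 1. Let w_1, …, w_n : Ω → ℝ be i.i.d. standard Gaussian random variables and g_1, …, g_n : Ω → ℝ random variables such that the vector (w_1,…,w_n) is independent of the vector (g_1,…,g_n), and suppose E[g_j^8] ≤ K for every j and some constant K < ∞. Then E[| n^{-1/2} Σ_{j=1}^n w_j g_j |^8] ≤ 105 · K. -/

import Mathlib

open MeasureTheory ProbabilityTheory Filter

open Real

namespace EighthMoment

noncomputable def Ig (k : ℕ) : ℝ := ∫ x : ℝ, x ^ k * Real.exp (-x ^ 2 / 2)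

lemma integrable_pow_exp (k : ℕ) :
    Integrable (fun x : ℝ => x ^ k * Real.exp (-x ^ 2 / 2)) := by
  have h := integrable_rpow_mul_exp_neg_mul_sq (b := (1:ℝ)/2)
      (by norm_num) (s := (k:ℝ))
      (lt_of_lt_of_le neg_one_lt_zero (Nat.cast_nonneg k))
  have heq : (fun x : ℝ => x ^ ((k:ℝ)) * Real.exp (-(1/2 : ℝ) * x ^ 2))
      = fun x : ℝ => x ^ k * Real.exp (-x ^ 2 / 2) := by
    funext x
    rw [Real.rpow_natCast]
    ring_nf
  rwa [heq] at h

lemma hasDerivAt_exp_neg_sq (x : ℝ) :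
    HasDerivAt (fun x : ℝ => Real.exp (-x ^ 2 / 2)) (Real.exp (-x ^ 2 / 2) * (-x)) x := by
  have h1 : HasDerivAt (fun x : ℝ => -x ^ 2 / 2) (-x) x := by
    have := ((hasDerivAt_pow 2 x).neg.div_const 2)
    refine this.congr_deriv ?_
    simp
    ring
  exact h1.exp

lemma Ig_rec (k : ℕ) : Ig (k + 2) = (k + 1 : ℝ) * Ig k := by
  have hd : ∀ x : ℝ, HasDerivAt (fun x : ℝ => x ^ (k + 1) * Real.exp (-x ^ 2 / 2))
      (((k : ℝ) + 1) * (x ^ k * Real.exp (-x ^ 2 / 2)) - x ^ (k + 2) * Real.exp (-x ^ 2 / 2)) x := by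
    intro x
    have h1 : HasDerivAt (fun x : ℝ => x ^ (k + 1)) (((k : ℝ) + 1) * x ^ k) x := by
      simpa using hasDerivAt_pow (k + 1) x
    have := h1.mul (hasDerivAt_exp_neg_sq x)
    refine this.congr_deriv ?_
    ring
  have hf' : Integrable (fun x : ℝ =>
      ((k : ℝ) + 1) * (x ^ k * Real.exp (-x ^ 2 / 2)) - x ^ (k + 2) * Real.exp (-x ^ 2 / 2)) :=
    ((integrable_pow_exp k).const_mul _).sub (integrable_pow_exp (k + 2))
  have h0 := integral_eq_zero_of_hasDerivAt_of_integrable hd hf' (integrable_pow_exp (k + 1))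
  rw [integral_sub ((integrable_pow_exp k).const_mul _) (integrable_pow_exp (k + 2)),
    integral_const_mul, sub_eq_zero] at h0
  rw [Ig, Ig, ← h0]

lemma Ig_zero : Ig 0 = Real.sqrt (2 * π) := by
  have h := integral_gaussian (1/2 : ℝ)
  have heq : (fun x : ℝ => Real.exp (-(1/2 : ℝ) * x ^ 2))
      = fun x : ℝ => x ^ 0 * Real.exp (-x ^ 2 / 2) := by
    funext x; ring_nf
  rw [heq] at h
  rw [Ig, h]
  rw [show π / (1/2 : ℝ) = 2 * π by ring]

lemma Ig_one : Ig 1 = 0 := by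
  have hd : ∀ x : ℝ, HasDerivAt (fun x : ℝ => -Real.exp (-x ^ 2 / 2))
      (x ^ 1 * Real.exp (-x ^ 2 / 2)) x := by
    intro x
    have := (hasDerivAt_exp_neg_sq x).neg
    refine this.congr_deriv ?_
    ring
  have hfneg : Integrable (fun x : ℝ => -Real.exp (-x ^ 2 / 2)) := by
    exact (by simpa using integrable_pow_exp 0 :
      Integrable (fun x : ℝ => Real.exp (-x ^ 2 / 2))).neg
  have := integral_eq_zero_of_hasDerivAt_of_integrable hd (integrable_pow_exp 1) hfneg
  simpa [Ig] using this

open scoped NNReal ENNReal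

noncomputable def gm : ℕ → ℝ
  | 0 => 1
  | 2 => 1
  | 4 => 3
  | 6 => 15
  | 8 => 105
  | _ => 0

@[simp] lemma gm0 : gm 0 = 1 := rfl
@[simp] lemma gm1 : gm 1 = 0 := rfl
@[simp] lemma gm2 : gm 2 = 1 := rfl
@[simp] lemma gm3 : gm 3 = 0 := rfl
@[simp] lemma gm4 : gm 4 = 3 := rfl
@[simp] lemma gm5 : gm 5 = 0 := rfl
@[simp] lemma gm6 : gm 6 = 15 := rfl
@[simp] lemma gm7 : gm 7 = 0 := rfl
@[simp] lemma gm8 : gm 8 = 105 := rfl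

lemma gaussianReal_eq : gaussianReal 0 1
    = MeasureTheory.volume.withDensity
      (fun x => ((Real.toNNReal (gaussianPDFReal 0 1 x) : ℝ≥0) : ℝ≥0∞)) := by
  rw [gaussianReal_of_var_ne_zero 0 one_ne_zero]
  rfl

lemma pdf_meas : Measurable (fun x => Real.toNNReal (gaussianPDFReal 0 1 x)) :=
  (measurable_gaussianPDFReal 0 1).real_toNNReal

lemma integral_gaussianReal_eq (f : ℝ → ℝ) :
    ∫ x, f x ∂(gaussianReal 0 1) = ∫ x, gaussianPDFReal 0 1 x * f x := by
  rw [gaussianReal_eq, integral_withDensity_eq_integral_smul pdf_meas]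
  congr 1
  funext x
  simp [NNReal.smul_def, Real.coe_toNNReal _ (gaussianPDFReal_nonneg 0 1 x)]

lemma integrable_gaussianReal_iff (f : ℝ → ℝ) :
    Integrable f (gaussianReal 0 1) ↔
      Integrable (fun x => gaussianPDFReal 0 1 x * f x) MeasureTheory.volume := by
  rw [gaussianReal_eq, integrable_withDensity_iff_integrable_smul pdf_meas]
  constructor <;> intro h <;> [skip; skip] <;>
  · refine h.congr (Filter.Eventually.of_forall fun x => ?_)
    simp [NNReal.smul_def, Real.coe_toNNReal _ (gaussianPDFReal_nonneg 0 1 x)]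

lemma pdf_form (x : ℝ) :
    gaussianPDFReal 0 1 x = (Real.sqrt (2 * π))⁻¹ * Real.exp (-x ^ 2 / 2) := by
  rw [gaussianPDFReal]
  norm_num

lemma integrable_pow_gauss (k : ℕ) : Integrable (fun x : ℝ => x ^ k) (gaussianReal 0 1) := by
  rw [integrable_gaussianReal_iff]
  have := (integrable_pow_exp k).const_mul (Real.sqrt (2 * π))⁻¹
  refine this.congr (Filter.Eventually.of_forall fun x => ?_)
  simp only [pdf_form]
  ring

lemma integral_pow_gauss_eq (k : ℕ) :
    ∫ x, x ^ k ∂(gaussianReal 0 1) = (Real.sqrt (2 * π))⁻¹ * Ig k := by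
  rw [integral_gaussianReal_eq, Ig, ← integral_const_mul]
  congr 1
  funext x
  rw [pdf_form]
  ring

lemma sqrt_two_pi_pos : (0:ℝ) < Real.sqrt (2 * π) :=
  Real.sqrt_pos.mpr (by positivity)

lemma integral_pow_gauss (k : ℕ) (hk : k ≤ 8) :
    ∫ x, x ^ k ∂(gaussianReal 0 1) = gm k := by
  have h2 : Ig 2 = 1 * Ig 0 := by rw [Ig_rec 0]; norm_num
  have h3 : Ig 3 = 2 * Ig 1 := by rw [Ig_rec 1]; norm_num
  have h4 : Ig 4 = 3 * Ig 2 := by rw [Ig_rec 2]; norm_num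
  have h5 : Ig 5 = 4 * Ig 3 := by rw [Ig_rec 3]; norm_num
  have h6 : Ig 6 = 5 * Ig 4 := by rw [Ig_rec 4]; norm_num
  have h7 : Ig 7 = 6 * Ig 5 := by rw [Ig_rec 5]; norm_num
  have h8 : Ig 8 = 7 * Ig 6 := by rw [Ig_rec 6]; norm_num
  have hs := sqrt_two_pi_pos.ne'
  interval_cases k <;>
    simp only [gm0, gm1, gm2, gm3, gm4, gm5, gm6, gm7, gm8, integral_pow_gauss_eq, h8, h7, h6, h5, h4, h3, h2, Ig_one, Ig_zero] <;>
    field_simp <;> ring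
lemma key_identity (k : ℕ) (hk : k ≤ 8) (a v : ℝ) :
    ∑ i ∈ Finset.range (k + 1),
      (a ^ i * gm i) * (gm (k - i) * v ^ ((k - i) / 2)) * (k.choose i : ℝ)
      = gm k * (a ^ 2 + v) ^ (k / 2) := by
  interval_cases k <;> norm_num [Finset.sum_range_succ, Nat.choose] <;> ring

lemma pi_moment : ∀ (n : ℕ) (c : Fin n → ℝ) (k : ℕ), k ≤ 8 →
    Integrable (fun x : Fin n → ℝ => (∑ j, c j * x j) ^ k)
      (Measure.pi fun _ : Fin n => gaussianReal 0 1) ∧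
    ∫ x, (∑ j, c j * x j) ^ k ∂(Measure.pi fun _ : Fin n => gaussianReal 0 1)
      = gm k * (∑ j, c j ^ 2) ^ (k / 2) := by
  intro n
  induction n with
  | zero =>
    intro c k hk
    have hs : (fun x : Fin 0 → ℝ => (∑ j, c j * x j) ^ k) = fun _ => (0:ℝ) ^ k := by
      funext x; simp
    refine ⟨by rw [hs]; exact integrable_const _, ?_⟩
    rw [hs, integral_const]
    have h0 : (∑ j : Fin 0, c j ^ 2) = 0 := by simp
    rw [h0]
    simp only [measure_univ, ENNReal.toReal_one, smul_eq_mul, one_mul]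
    interval_cases k <;> norm_num
  | succ n ih =>
    intro c k hk
    have hmp := measurePreserving_piFinSuccAbove (fun _ : Fin (n + 1) => gaussianReal 0 1) 0
    set e := MeasurableEquiv.piFinSuccAbove (fun _ : Fin (n + 1) => ℝ) 0 with he
    set c' : Fin n → ℝ := fun j => c j.succ with hc'
    set G : ℝ × (Fin n → ℝ) → ℝ :=
      fun p => (c 0 * p.1 + ∑ j, c' j * p.2 j) ^ k with hG
    have hcomp : ∀ x : Fin (n + 1) → ℝ, (∑ j, c j * x j) ^ k = G (e x) := by
      intro x
      simp only [hG, he, MeasurableEquiv.piFinSuccAbove_apply, Fin.sum_univ_succ, hc',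
        Fin.insertNthEquiv_zero, Fin.consEquiv_symm_apply, Fin.tail]
    set ν := Measure.pi fun _ : Fin n => gaussianReal 0 1 with hν
    set pr := (gaussianReal 0 1).prod ν with hpr
    have hGmeas : Measurable G := by
      apply Measurable.pow_const
      exact (measurable_fst.const_mul _).add
        (Finset.measurable_sum _ fun j _ => (measurable_snd.eval.const_mul _))
    -- expansion of G as a finite sum of product functions
    have hGexp : G = fun p : ℝ × (Fin n → ℝ) =>
        ∑ i ∈ Finset.range (k + 1),
          ((fun y : ℝ => (c 0 * y) ^ i) p.1 * (fun z : Fin n → ℝ => (∑ j, c' j * z j) ^ (k - i)) p.2)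
            * (k.choose i : ℝ) := by
      funext p
      exact add_pow _ _ _
    have hint1 : ∀ i : ℕ, i ≤ 8 → Integrable (fun y : ℝ => (c 0 * y) ^ i) (gaussianReal 0 1) := by
      intro i hi
      have := (integrable_pow_gauss i).const_mul ((c 0) ^ i)
      refine this.congr (Filter.Eventually.of_forall fun y => ?_)
      simp [mul_pow]
    have hterm : ∀ i ∈ Finset.range (k + 1), Integrable (fun p : ℝ × (Fin n → ℝ) =>
        ((fun y : ℝ => (c 0 * y) ^ i) p.1 * (fun z : Fin n → ℝ => (∑ j, c' j * z j) ^ (k - i)) p.2)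
          * (k.choose i : ℝ)) pr := by
      intro i hi
      refine Integrable.mul_const ?_ _
      exact (hint1 i (le_trans (Nat.lt_succ_iff.mp (Finset.mem_range.mp hi)) hk)).mul_prod
        (ih c' (k - i) (le_trans (Nat.sub_le k i) hk)).1
    have hGint : Integrable G pr := by
      rw [hGexp]
      exact integrable_finset_sum _ hterm
    constructor
    · have := (hmp.integrable_comp_emb e.measurableEmbedding).mpr hGint
      refine this.congr (Filter.Eventually.of_forall fun x => ?_)
      exact (hcomp x).symm
    · have htrans : ∫ x : Fin (n+1) → ℝ, (∑ j, c j * x j) ^ k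
          ∂(Measure.pi fun _ : Fin (n + 1) => gaussianReal 0 1) = ∫ p, G p ∂pr := by
        rw [← hmp.integral_comp e.measurableEmbedding G]
        exact integral_congr_ae (Filter.Eventually.of_forall fun x => hcomp x)
      rw [htrans, hGexp, integral_finset_sum _ hterm]
      have hval : ∀ i ∈ Finset.range (k + 1), ∫ p : ℝ × (Fin n → ℝ),
          ((fun y : ℝ => (c 0 * y) ^ i) p.1 * (fun z : Fin n → ℝ => (∑ j, c' j * z j) ^ (k - i)) p.2)
            * (k.choose i : ℝ) ∂pr
          = ((c 0) ^ i * gm i) * (gm (k - i) * (∑ j, c' j ^ 2) ^ ((k - i) / 2)) * (k.choose i : ℝ) := by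
        intro i hi
        have hi8 : i ≤ 8 := le_trans (Nat.lt_succ_iff.mp (Finset.mem_range.mp hi)) hk
        rw [integral_mul_const, hpr]
        rw [integral_prod_mul (μ := gaussianReal 0 1) (ν := ν)
          (fun y : ℝ => (c 0 * y) ^ i) (fun z : Fin n → ℝ => (∑ j, c' j * z j) ^ (k - i))]
        have h1 : ∫ y : ℝ, (c 0 * y) ^ i ∂(gaussianReal 0 1) = (c 0) ^ i * gm i := by
          rw [← integral_pow_gauss i hi8, ← integral_const_mul]
          exact integral_congr_ae (Filter.Eventually.of_forall fun y => by simp [mul_pow])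
        rw [h1, (ih c' (k - i) (le_trans (Nat.sub_le k i) hk)).2]
      rw [Finset.sum_congr rfl hval]
      have hsum : (∑ j : Fin (n+1), c j ^ 2) = (c 0) ^ 2 + ∑ j, c' j ^ 2 := by
        rw [Fin.sum_univ_succ]
      rw [hsum]
      exact key_identity k hk (c 0) (∑ j, c' j ^ 2)
end EighthMoment

open EighthMoment in
/-- The core estimate behind the strengthened Lemma 20 of Matthews et al.: if
`w 1, …, w n` are i.i.d. standard Gaussians, the vector `w` is independent of the vector
`g`, and `E[(g j)^8] ≤ K` for every `j`, then the eighth moment of the rescaled weighted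
sum `n^{-1/2} ∑ j, w j * g j` is at most `105 * K` (the eighth moment of `N(0,σ²)` being
`105 σ^8`). -/
theorem eighth_moment_weighted_sum_bound
    {Ω : Type*} [MeasurableSpace Ω] (P : Measure Ω) [IsProbabilityMeasure P]
    (n : ℕ) (hn : 1 ≤ n)
    (w g : Fin n → Ω → ℝ)
    (hwm : ∀ j, Measurable (w j)) (hgm : ∀ j, Measurable (g j))
    (hwlaw : ∀ j, P.map (w j) = gaussianReal 0 1)
    (hwiid : iIndepFun (m := fun _ : Fin n => (inferInstance : MeasurableSpace ℝ)) w P)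
    (hindep : IndepFun (fun ω (j : Fin n) => w j ω) (fun ω (j : Fin n) => g j ω) P)
    (K : ℝ)
    (hgint : ∀ j, Integrable (fun ω => (g j ω) ^ 8) P)
    (hK : ∀ j, ∫ ω, (g j ω) ^ 8 ∂P ≤ K) :
    ∫ ω, |(Real.sqrt n)⁻¹ * ∑ j, w j ω * g j ω| ^ 8 ∂P ≤ 105 * K := by
  classical
  have hn0 : (0:ℝ) < n := by exact_mod_cast hn
  set c : ℝ := (Real.sqrt n)⁻¹ with hc
  have hc2 : c ^ 2 = (n : ℝ)⁻¹ := by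
    rw [hc, inv_pow, Real.sq_sqrt (le_of_lt hn0)]
  set W : Ω → Fin n → ℝ := fun ω j => w j ω with hWdef
  set G : Ω → Fin n → ℝ := fun ω j => g j ω with hGdef
  have hWm : Measurable W := measurable_pi_lambda _ hwm
  have hGm : Measurable G := measurable_pi_lambda _ hgm
  have hK0 : (0:ℝ) ≤ K :=
    le_trans (integral_nonneg fun ω => by positivity) (hK ⟨0, hn⟩)
  -- law of W is the product of standard gaussians
  have hW : P.map W = Measure.pi (fun _ : Fin n => gaussianReal 0 1) := by
    symm
    refine Measure.pi_eq fun s hs => ?_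
    rw [Measure.map_apply hWm (MeasurableSet.univ_pi hs)]
    have hpre : W ⁻¹' (Set.pi Set.univ s) = ⋂ i, w i ⁻¹' s i := by
      ext ω; simp [hWdef, Set.mem_pi]
    rw [hpre, hwiid.meas_iInter (fun i => ⟨s i, hs i, rfl⟩)]
    refine Finset.prod_congr rfl fun i _ => ?_
    rw [← hwlaw i, Measure.map_apply (hwm i) (hs i)]
  have hprod : P.map (fun ω => (W ω, G ω)) = (P.map W).prod (P.map G) :=
    (indepFun_iff_map_prod_eq_prod_map_map hWm.aemeasurable hGm.aemeasurable).mp hindep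
  set F : (Fin n → ℝ) × (Fin n → ℝ) → ℝ :=
    fun p => (∑ j, (c * p.2 j) * p.1 j) ^ 8 with hF
  have hFmeas : Measurable F := by
    apply Measurable.pow_const
    exact Finset.measurable_sum _ fun j _ =>
      Measurable.mul (f := fun p : (Fin n → ℝ) × (Fin n → ℝ) => c * p.2 j)
        (g := fun p : (Fin n → ℝ) × (Fin n → ℝ) => p.1 j)
        (Measurable.const_mul (f := fun p : (Fin n → ℝ) × (Fin n → ℝ) => p.2 j)
          ((measurable_pi_apply j).comp measurable_snd) c)
        ((measurable_pi_apply j).comp measurable_fst)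
  have hpt : ∀ ω, |c * ∑ j, w j ω * g j ω| ^ 8 = F (W ω, G ω) := by
    intro ω
    have h1 : (∑ j, (c * G ω j) * W ω j) = c * ∑ j, w j ω * g j ω := by
      rw [Finset.mul_sum]
      refine Finset.sum_congr rfl fun j _ => ?_
      simp only [hWdef, hGdef]
      ring
    have h2 : F (W ω, G ω) = (∑ j, (c * G ω j) * W ω j) ^ 8 := rfl
    rw [h2, h1, ← abs_pow, abs_of_nonneg (by positivity)]
  have hmeas0 : Measurable fun ω => |c * ∑ j, w j ω * g j ω| ^ 8 :=
    (((Finset.measurable_sum _ fun j _ => (hwm j).mul (hgm j)).const_mul c).abs).pow_const 8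
  rw [integral_eq_lintegral_of_nonneg_ae
    (Filter.Eventually.of_forall fun ω => by positivity) hmeas0.aestronglyMeasurable]
  apply ENNReal.toReal_le_of_le_ofReal (by positivity)
  have hFm' : Measurable fun p => ENNReal.ofReal (F p) :=
    ENNReal.measurable_ofReal.comp hFmeas
  have hl1 : ∫⁻ ω, ENNReal.ofReal (|c * ∑ j, w j ω * g j ω| ^ 8) ∂P
      = ∫⁻ p, ENNReal.ofReal (F p)
          ∂((Measure.pi fun _ : Fin n => gaussianReal 0 1).prod (P.map G)) := by
    have hmap := lintegral_map (μ := P) hFm' (hWm.prodMk hGm)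
    rw [hprod, hW] at hmap
    rw [hmap]
    exact lintegral_congr fun ω => by rw [hpt ω]
  rw [hl1, MeasureTheory.lintegral_prod_symm _ hFm'.aemeasurable]
  have hinner : ∀ y : Fin n → ℝ,
      ∫⁻ x, ENNReal.ofReal (F (x, y)) ∂(Measure.pi fun _ : Fin n => gaussianReal 0 1)
        = ENNReal.ofReal (105 * (∑ j, (c * y j) ^ 2) ^ 4) := by
    intro y
    have hpm := pi_moment n (fun j => c * y j) 8 le_rfl
    have hint : Integrable (fun x : Fin n → ℝ => F (x, y))
        (Measure.pi fun _ : Fin n => gaussianReal 0 1) := hpm.1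
    rw [← ofReal_integral_eq_lintegral_ofReal hint
      (Filter.Eventually.of_forall fun x => by positivity)]
    congr 1
    have h2 := hpm.2
    norm_num at h2
    exact h2
  rw [lintegral_congr hinner]
  have hbound : ∀ y : Fin n → ℝ,
      ENNReal.ofReal (105 * (∑ j, (c * y j) ^ 2) ^ 4)
        ≤ ENNReal.ofReal ((105 / n) * ∑ j, (y j) ^ 8) := by
    intro y
    apply ENNReal.ofReal_le_ofReal
    have hjensen := pow_sum_div_card_le_sum_pow (s := (Finset.univ : Finset (Fin n)))
      (f := fun j : Fin n => (y j) ^ 2) (fun i _ => sq_nonneg _) 3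
    have hcard : ((Finset.univ : Finset (Fin n)).card : ℝ) = n := by simp
    rw [hcard] at hjensen
    have hrw : (∑ j, (c * y j) ^ 2) = (∑ j, (y j) ^ 2) / n := by
      rw [Finset.sum_div]
      refine Finset.sum_congr rfl fun j _ => ?_
      rw [mul_pow, hc2, div_eq_inv_mul]
    calc 105 * (∑ j, (c * y j) ^ 2) ^ 4
        = (105 / n) * ((∑ j, (y j) ^ 2) ^ (3 + 1) / (n:ℝ) ^ 3) := by
          rw [hrw, div_pow]; ring
      _ ≤ (105 / n) * ∑ j, ((y j) ^ 2) ^ (3 + 1) := by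
          apply mul_le_mul_of_nonneg_left hjensen (by positivity)
      _ = (105 / n) * ∑ j, (y j) ^ 8 := by norm_num [← pow_mul]
  calc ∫⁻ y, ENNReal.ofReal (105 * (∑ j, (c * y j) ^ 2) ^ 4) ∂(P.map G)
      ≤ ∫⁻ y, ENNReal.ofReal ((105 / n) * ∑ j, (y j) ^ 8) ∂(P.map G) :=
        lintegral_mono fun y => hbound y
    _ = ∫⁻ ω, ENNReal.ofReal ((105 / n) * ∑ j, (g j ω) ^ 8) ∂P := by
        rw [lintegral_map (by
          exact ENNReal.measurable_ofReal.comp ((Finset.measurable_sum _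
            fun j _ => (measurable_pi_apply j).pow_const 8).const_mul _)) hGm]
    _ = ENNReal.ofReal (∫ ω, (105 / n) * ∑ j, (g j ω) ^ 8 ∂P) := by
        rw [ofReal_integral_eq_lintegral_ofReal
          ((integrable_finset_sum _ fun j _ => hgint j).const_mul _)
          (Filter.Eventually.of_forall fun ω => by positivity)]
    _ ≤ ENNReal.ofReal (105 * K) := by
        apply ENNReal.ofReal_le_ofReal
        rw [integral_const_mul, integral_finset_sum _ fun j _ => hgint j]
        have hsum : ∑ j : Fin n, ∫ ω, (g j ω) ^ 8 ∂P ≤ (n : ℝ) * K := by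
          calc ∑ j : Fin n, ∫ ω, (g j ω) ^ 8 ∂P ≤ ∑ _j : Fin n, K :=
                Finset.sum_le_sum fun j _ => hK j
            _ = (n : ℝ) * K := by simp [Finset.sum_const, mul_comm]
        calc (105 / n) * ∑ j : Fin n, ∫ ω, (g j ω) ^ 8 ∂P
            ≤ (105 / n) * ((n : ℝ) * K) :=
              mul_le_mul_of_nonneg_left hsum (by positivity)
          _ = 105 * K := by field_simp
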